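/- With the setup of the previous statement (ρ: G → GL(V), x in the standard apartment): gl(V̂)_{ρ_*(x),r} ∩ ρ(ĝ) = ρ(ĝ_{x,r}) for all r ∈ ℝ, where ĝ_{x,r} and gl(V̂)_{ρ_*(x),r} denote the respective Moy-Prasad filtrations on ĝ = g ⊗ F and gl(V) ⊗ F. -/

import Mathlib

open HahnSeries

variable {k g E : Type*} [Field k] [Algebra ℝ k]
  [AddCommGroup g] [Module k g] [AddCommGroup E] [Module k E]

/-- The map `ĝ = g ⊗ F → E ⊗ F` induced coefficientwise by a linear map `ρ : g → E`,
where `M ⊗ F` is modelled by Laurent series with coefficients in `M`. -/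
noncomputable def coeffMap (ρ : g →ₗ[k] E) (f : HahnSeries ℤ g) : HahnSeries ℤ E :=
  { coeff := fun m => ρ (f.coeff m)
    isPWO_support' := f.isPWO_support'.mono (fun m hm => by
      simp only [Function.mem_support, ne_eq] at hm ⊢
      intro h
      exact hm (by rw [h, map_zero])) }

/-- The Moy–Prasad filtration step determined by an eigenspace decomposition
`P : ι → Submodule k M` of `M` for the operator `τ + ad(x̃)`, with eigenvalue
labels `e : ι → ℝ`: the coefficient of `z^m` lies in the sum of the pieces with
`e i + m ≥ r`. -/
def eigFilt {M : Type*} [AddCommGroup M] [Module k M] {ι : Type*}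
    (P : ι → Submodule k M) (e : ι → ℝ) (r : ℝ) : Set (HahnSeries ℤ M) :=
  {f | ∀ m : ℤ, f.coeff m ∈ ⨆ i ∈ {i : ι | r ≤ e i + m}, P i}

lemma mem_biSup_iff_decompose' {M ι' : Type*} [AddCommGroup M] [Module k M] [DecidableEq ι']
    (P : ι' → Submodule k M) [DirectSum.Decomposition P] (s : Set ι') (x : M) :
    x ∈ ⨆ i ∈ s, P i ↔ ∀ i ∉ s, (DirectSum.decompose P x i : M) = 0 := by
  constructor
  · intro hx i hi
    rw [iSup_subtype'] at hx
    refine Submodule.iSup_induction (motive := fun y => (DirectSum.decompose P y i : M) = 0)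
      _ hx ?_ ?_ ?_
    · rintro ⟨j, hj⟩ y hy
      exact DirectSum.decompose_of_mem_ne P hy (fun h => hi (h ▸ hj))
    · simp
    · intro a b ha hb
      rw [DirectSum.decompose_add, DirectSum.add_apply, Submodule.coe_add, ha, hb, add_zero]
  · intro h
    classical
    rw [← DirectSum.sum_support_decompose P x]
    refine Submodule.sum_mem _ ?_
    intro j hj
    have hjs : j ∈ s := by
      by_contra hjs
      exact (DFinsupp.mem_support_iff.mp hj) (Subtype.ext (h j hjs))
    exact Submodule.mem_iSup_of_mem j (Submodule.mem_iSup_of_mem hjs (SetLike.coe_mem _))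

lemma decompose_eig_apply {M ι' : Type*} [AddCommGroup M] [Module k M] [DecidableEq ι']
    (P : ι' → Submodule k M) [DirectSum.Decomposition P]
    (B : M →ₗ[k] M) (e : ι' → ℝ)
    (hB : ∀ j, ∀ w ∈ P j, B w = algebraMap ℝ k (e j) • w) (w : M) (j : ι') :
    (DirectSum.decompose P (B w) j : M)
      = algebraMap ℝ k (e j) • (DirectSum.decompose P w j : M) := by
  classical
  let π : M →+ M :=
    ((P j).subtype.toAddMonoidHom.comp (DFinsupp.evalAddMonoidHom j)).comp
      (DirectSum.decomposeAddEquiv P).toAddMonoidHom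
  have hπ : ∀ y : M, π y = (DirectSum.decompose P y j : M) := fun y => rfl
  have hw := DirectSum.sum_support_decompose P w
  calc (DirectSum.decompose P (B w) j : M)
      = π (B (∑ j' ∈ (DirectSum.decompose P w).support, ((DirectSum.decompose P w) j' : M))) := by
        rw [hπ, hw]
    _ = ∑ j' ∈ (DirectSum.decompose P w).support,
          π (B ((DirectSum.decompose P w) j' : M)) := by rw [map_sum, map_sum]
    _ = ∑ j' ∈ (DirectSum.decompose P w).support,
          (if j' = j then algebraMap ℝ k (e j) • ((DirectSum.decompose P w) j : M) else 0) := by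
        refine Finset.sum_congr rfl (fun j' _ => ?_)
        rw [hB j' _ (SetLike.coe_mem _), hπ]
        by_cases h : j' = j
        · subst h
          rw [if_pos rfl]
          rw [DirectSum.decompose_of_mem_same P
            (Submodule.smul_mem _ _ (SetLike.coe_mem _))]
        · rw [if_neg h]
          exact DirectSum.decompose_of_mem_ne P
            (Submodule.smul_mem _ _ (SetLike.coe_mem _)) h
    _ = algebraMap ℝ k (e j) • (DirectSum.decompose P w j : M) := by
        rw [Finset.sum_ite_eq' _ j]
        by_cases hj : j ∈ (DirectSum.decompose P w).support
        · rw [if_pos hj]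
        · rw [if_neg hj]
          rw [DFinsupp.notMem_support_iff.mp hj]
          simp

lemma key_coeff {g E : Type*} [AddCommGroup g] [Module k g] [AddCommGroup E] [Module k E]
    {ι κ : Type*} [DecidableEq ι] [DecidableEq κ]
    (gP : ι → Submodule k g) (EP : κ → Submodule k E)
    [DirectSum.Decomposition gP] [DirectSum.Decomposition EP]
    (eG : ι → ℝ) (eE : κ → ℝ)
    (Ag : g →ₗ[k] g) (AE : E →ₗ[k] E)
    (hAg : ∀ i, ∀ v ∈ gP i, Ag v = (algebraMap ℝ k (eG i)) • v)
    (hAE : ∀ j, ∀ w ∈ EP j, AE w = (algebraMap ℝ k (eE j)) • w)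
    (ρ : g →ₗ[k] E) (hinj : Function.Injective ρ)
    (hcomm : AE ∘ₗ ρ = ρ ∘ₗ Ag)
    (s : Set ι) (t : Set κ) (hst : ∀ i j, eE j = eG i → (i ∈ s ↔ j ∈ t))
    (v : g) :
    ρ v ∈ ⨆ j ∈ t, EP j ↔ v ∈ ⨆ i ∈ s, gP i := by
  classical
  -- key fact: ρ maps each piece gP i into the sum of pieces EP j with eE j = eG i
  have hpiece : ∀ i : ι, ∀ u ∈ gP i, ∀ j : κ, eE j ≠ eG i →
      (DirectSum.decompose EP (ρ u) j : E) = 0 := by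
    intro i u hu j hne
    have h1 : AE (ρ u) = algebraMap ℝ k (eG i) • ρ u := by
      have h2 := LinearMap.congr_fun hcomm u
      rw [LinearMap.comp_apply, LinearMap.comp_apply] at h2
      rw [h2, hAg i u hu, map_smul]
    have h3 : algebraMap ℝ k (eE j) • (DirectSum.decompose EP (ρ u) j : E)
        = algebraMap ℝ k (eG i) • (DirectSum.decompose EP (ρ u) j : E) := by
      rw [← decompose_eig_apply EP AE eE hAE (ρ u) j, h1, DirectSum.decompose_smul,
        DFinsupp.smul_apply, Submodule.coe_smul]
    have h4 : (algebraMap ℝ k (eE j) - algebraMap ℝ k (eG i))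
        • (DirectSum.decompose EP (ρ u) j : E) = 0 := by
      rw [sub_smul, h3, sub_self]
    have hu0 : (algebraMap ℝ k (eE j) - algebraMap ℝ k (eG i)) ≠ 0 := by
      rw [sub_ne_zero]
      exact fun h => hne ((algebraMap ℝ k).injective h)
    have := congrArg (fun y => (algebraMap ℝ k (eE j) - algebraMap ℝ k (eG i))⁻¹ • y) h4
    simpa [smul_smul, inv_mul_cancel₀ hu0] using this
  -- decompose v into its components
  have hv := DirectSum.sum_support_decompose gP v
  constructor
  · intro hρ
    -- split v into good and bad parts
    set c : ι → g := fun i => (DirectSum.decompose gP v i : g) with hc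
    have hmemc : ∀ i, c i ∈ gP i := fun i => SetLike.coe_mem _
    set a : g := ∑ i ∈ (DirectSum.decompose gP v).support.filter (· ∈ s), c i with ha
    set b : g := ∑ i ∈ (DirectSum.decompose gP v).support.filter (· ∉ s), c i with hb
    have hab : a + b = v := by
      rw [ha, hb, Finset.sum_filter_add_sum_filter_not _ (· ∈ s) c]
      exact hv
    -- components of ρ b vanish everywhere
    have hbcomp : ∀ j : κ, (DirectSum.decompose EP (ρ b) j : E) = 0 := by
      intro j
      by_cases hjt : j ∈ t
      · -- ρ b has zero component at j ∈ t since each piece maps into eigenvalue-matching pieces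
        rw [hb, map_sum]
        have : ∀ i ∈ (DirectSum.decompose gP v).support.filter (· ∉ s),
            (DirectSum.decompose EP (ρ (c i)) j : E) = 0 := by
          intro i hi
          simp only [Finset.mem_filter] at hi
          refine hpiece i (c i) (hmemc i) j (fun h => ?_)
          exact hi.2 ((hst i j h).mpr hjt)
        calc (DirectSum.decompose EP
              (∑ i ∈ (DirectSum.decompose gP v).support.filter (· ∉ s), ρ (c i)) j : E)
            = ∑ i ∈ (DirectSum.decompose gP v).support.filter (· ∉ s),
                (DirectSum.decompose EP (ρ (c i)) j : E) := by
              rw [DirectSum.decompose_sum, DFinsupp.finset_sum_apply,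
                AddSubmonoidClass.coe_finset_sum]
          _ = 0 := Finset.sum_eq_zero this
      · -- j ∉ t : component of ρ v is 0 (hypothesis) and component of ρ a is 0
        have h1 : (DirectSum.decompose EP (ρ v) j : E) = 0 :=
          (mem_biSup_iff_decompose' EP t (ρ v)).mp hρ j hjt
        have h2 : (DirectSum.decompose EP (ρ a) j : E) = 0 := by
          rw [ha, map_sum]
          have : ∀ i ∈ (DirectSum.decompose gP v).support.filter (· ∈ s),
              (DirectSum.decompose EP (ρ (c i)) j : E) = 0 := by
            intro i hi
            simp only [Finset.mem_filter] at hi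
            refine hpiece i (c i) (hmemc i) j (fun h => ?_)
            exact hjt ((hst i j h).mp hi.2)
          calc (DirectSum.decompose EP
                (∑ i ∈ (DirectSum.decompose gP v).support.filter (· ∈ s), ρ (c i)) j : E)
              = ∑ i ∈ (DirectSum.decompose gP v).support.filter (· ∈ s),
                  (DirectSum.decompose EP (ρ (c i)) j : E) := by
                rw [DirectSum.decompose_sum, DFinsupp.finset_sum_apply,
                  AddSubmonoidClass.coe_finset_sum]
            _ = 0 := Finset.sum_eq_zero this
        have h3 : ρ v = ρ a + ρ b := by rw [← map_add, hab]
        have := congrArg (fun y => (DirectSum.decompose EP y j : E)) h3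
        simp only [DirectSum.decompose_add, DirectSum.add_apply, Submodule.coe_add] at this
        rw [h1, h2, zero_add] at this
        exact this.symm
    -- hence ρ b = 0, so b = 0
    have hρb : ρ b = 0 := by
      have := DirectSum.sum_support_decompose EP (ρ b)
      rw [← this]
      exact Finset.sum_eq_zero (fun j _ => hbcomp j)
    have hb0 : b = 0 := hinj (by rw [hρb, map_zero])
    have hva : v = a := by rw [← hab, hb0, add_zero]
    rw [hva, ha]
    refine Submodule.sum_mem _ (fun i hi => ?_)
    simp only [Finset.mem_filter] at hi
    exact Submodule.mem_iSup_of_mem i (Submodule.mem_iSup_of_mem hi.2 (hmemc i))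
  · intro hvs
    rw [mem_biSup_iff_decompose' EP t (ρ v)]
    intro j hjt
    rw [← hv, map_sum]
    have : ∀ i ∈ (DirectSum.decompose gP v).support,
        (DirectSum.decompose EP (ρ ((DirectSum.decompose gP v i : g))) j : E) = 0 := by
      intro i hi
      by_cases his : i ∈ s
      · exact hpiece i _ (SetLike.coe_mem _) j (fun h => hjt ((hst i j h).mp his))
      · have : (DirectSum.decompose gP v i : g) = 0 :=
          (mem_biSup_iff_decompose' gP s v).mp hvs i his
        rw [this, map_zero]
        simp
    calc (DirectSum.decompose EP
          (∑ i ∈ (DirectSum.decompose gP v).support, ρ ((DirectSum.decompose gP v i : g))) j : E)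
        = ∑ i ∈ (DirectSum.decompose gP v).support,
            (DirectSum.decompose EP (ρ ((DirectSum.decompose gP v i : g))) j : E) := by
          rw [DirectSum.decompose_sum, DFinsupp.finset_sum_apply,
            AddSubmonoidClass.coe_finset_sum]
      _ = 0 := Finset.sum_eq_zero this

/-- With `ρ : G → GL(V)` a representation and `x` in the standard
apartment: `gl(V̂)_{ρ_*(x),r} ∩ ρ(ĝ) = ρ(ĝ_{x,r})` for all `r ∈ ℝ`.  Here `g` carries
the eigenspace decomposition `gP` of `τ + ad(x̃)` (eigenvalues `eG`), `E = gl(V)`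
carries the eigenspace decomposition `EP` of `τ + ad(dρ(x̃))` (eigenvalues `eE`),
`ρ` is injective and intertwines the two grading operators `Ag`, `AE`. -/
theorem stmt11 {ι κ : Type*} [Fintype ι] [Fintype κ] [DecidableEq ι] [DecidableEq κ]
    (gP : ι → Submodule k g) (EP : κ → Submodule k E)
    (eG : ι → ℝ) (eE : κ → ℝ)
    (hg : DirectSum.IsInternal gP) (hE : DirectSum.IsInternal EP)
    (Ag : g →ₗ[k] g) (AE : E →ₗ[k] E)
    (hAg : ∀ i, ∀ v ∈ gP i, Ag v = (algebraMap ℝ k (eG i)) • v)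
    (hAE : ∀ j, ∀ w ∈ EP j, AE w = (algebraMap ℝ k (eE j)) • w)
    (ρ : g →ₗ[k] E) (hinj : Function.Injective ρ)
    (hcomm : AE ∘ₗ ρ = ρ ∘ₗ Ag)
    (r : ℝ) (Φ : HahnSeries ℤ E) :
    (Φ ∈ eigFilt EP eE r ∧ ∃ f : HahnSeries ℤ g, coeffMap ρ f = Φ)
    ↔ (∃ f ∈ eigFilt gP eG r, coeffMap ρ f = Φ) := by
  classical
  letI : DirectSum.Decomposition gP := hg.chooseDecomposition
  letI : DirectSum.Decomposition EP := hE.chooseDecomposition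
  have hkey : ∀ (m : ℤ) (v : g),
      ρ v ∈ ⨆ j ∈ {j : κ | r ≤ eE j + m}, EP j ↔ v ∈ ⨆ i ∈ {i : ι | r ≤ eG i + m}, gP i :=
    fun m v => key_coeff gP EP eG eE Ag AE hAg hAE ρ hinj hcomm _ _
      (fun i j h => by simp only [Set.mem_setOf_eq, h]) v
  constructor
  · rintro ⟨hΦ, f, hf⟩
    refine ⟨f, fun m => ?_, hf⟩
    have hco : ρ (f.coeff m) = Φ.coeff m := congrArg (fun h => h.coeff m) hf
    have h1 := hΦ m
    rw [← hco] at h1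
    exact (hkey m (f.coeff m)).mp h1
  · rintro ⟨f, hf, hf2⟩
    refine ⟨fun m => ?_, f, hf2⟩
    have hco : Φ.coeff m = ρ (f.coeff m) := (congrArg (fun h => h.coeff m) hf2).symm
    rw [hco]
    exact (hkey m (f.coeff m)).mpr (hf m)
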